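/- Define elements q_r ∈ ℚ⟨C⟩ recursively by q_1 = −C_2 and q_{r+1} = q_r·C_1 − C_1·q_r (so that q_r corresponds to the Lie element ad(−b)^r(−a)). Then for every r ≥ 1, the mould ma(q_r) is concentrated in depth r and ma(q_r)(u_1,…,u_r) = Σ_{j=0}^{r−1} (−1)^j · binom(r−1, j) · u_{j+1}. -/

import Mathlib

/-!
Moulds are modelled as families `P = (P_r)_{r ≥ 0}` of ℚ-valued functions of `r`
rational variables; identities of rational functions are expressed as pointwise
identities, guarded (where divisions genuinely occur) by the genericity
condition that all consecutive block sums of the variables are nonzero.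
-/

/-- A mould: for each depth `r`, a function of `r` variables `u_1, …, u_r`. -/
abbrev Mould : Type := (r : ℕ) → (Fin r → ℚ) → ℚ

namespace Mould

/-- Membership in `ARI`: vanishing constant term (depth-0 part equal to `0`). -/
def MemARI (P : Mould) : Prop := ∀ u : Fin 0 → ℚ, P 0 u = 0

/-- The first `i` letters of the word `u`. -/
def take {r : ℕ} (u : Fin r → ℚ) (i : ℕ) (h : i ≤ r) : Fin i → ℚ :=
  fun j => u ⟨j.1, by have := j.2; omega⟩

/-- The letters of the word `u` from position `i` on. -/
def drop {r : ℕ} (u : Fin r → ℚ) (i : ℕ) : Fin (r - i) → ℚ :=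
  fun j => u ⟨i + j.1, by have := j.2; omega⟩

/-- Mould multiplication `mu`. -/
def mu (P Q : Mould) : Mould := fun r u =>
  ∑ i : Fin (r + 1), P i.1 (take u i.1 (by have := i.2; omega)) * Q (r - i.1) (drop u i.1)

/-- The bracket `lu` associated to `mu`. -/
def lu (P Q : Mould) : Mould := fun r u => mu P Q r u - mu Q P r u

/-- `dur`: multiplication by `u_1 + ⋯ + u_r`. -/
def dur (P : Mould) : Mould := fun r u => (∑ j, u j) * P r u

/-- `dar`: multiplication by `u_1 ⋯ u_r`. -/
def dar (P : Mould) : Mould := fun r u => (∏ j, u j) * P r u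

/-- `dur⁻¹`: division by `u_1 + ⋯ + u_r`. -/
def durInv (P : Mould) : Mould := fun r u => P r u / (∑ j, u j)

/-- `dar⁻¹`: division by `u_1 ⋯ u_r`. -/
def darInv (P : Mould) : Mould := fun r u => P r u / (∏ j, u j)

/-- `Δ = dar ∘ dur`: multiplication by `u_1 ⋯ u_r (u_1 + ⋯ + u_r)`. -/
def delta (P : Mould) : Mould := dar (dur P)

/-- `Δ⁻¹`: division by `u_1 ⋯ u_r (u_1 + ⋯ + u_r)`. -/
def deltaInv (P : Mould) : Mould := darInv (durInv P)

/-- The word `a⌈c`, for the decomposition `a = (u_1,…,u_i)`, `b = (u_{i+1},…,u_k)`,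
`c = (u_{k+1},…,u_r)` (0-indexed: `a` = positions `< i`, `b` = positions `i..k-1`,
`c` = positions `k..r-1`): `a` followed by `c` with the sum of the letters of `b`
added to the first letter of `c`. -/
def flexUpper {r : ℕ} (u : Fin r → ℚ) (i k : ℕ) (hik : i < k) (hkr : k < r) :
    Fin (i + (r - k)) → ℚ := fun j =>
  if hj : j.1 < i then u ⟨j.1, by omega⟩
  else if hj2 : j.1 = i then ∑ m : Fin (k + 1 - i), u ⟨i + m.1, by have := m.2; omega⟩
  else u ⟨k + (j.1 - i), by have := j.2; omega⟩

/-- The word `a⌉c`: `a` with the sum of the letters of `b` added to its last letter,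
followed by `c`. -/
def flexLower {r : ℕ} (u : Fin r → ℚ) (i k : ℕ) (hi : 0 < i) (hik : i < k) (hkr : k ≤ r) :
    Fin (i + (r - k)) → ℚ := fun j =>
  if hj : j.1 < i - 1 then u ⟨j.1, by omega⟩
  else if hj2 : j.1 = i - 1 then
    ∑ m : Fin (k - (i - 1)), u ⟨(i - 1) + m.1, by have := m.2; omega⟩
  else u ⟨k + (j.1 - i), by have := j.2; omega⟩

/-- The middle word `b = (u_{i+1},…,u_k)` of a decomposition. -/
def blockWord {r : ℕ} (u : Fin r → ℚ) (i k : ℕ) (h : k ≤ r) : Fin (k - i) → ℚ :=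
  fun m => u ⟨i + m.1, by have := m.2; omega⟩

/-- Ecalle's derivation `arit(P)` applied to `M`:
`(arit(P)·M)(u) = Σ M(a⌈c)P(b) − Σ M(a⌉c)P(b)`, the first sum over decompositions
with `b, c` nonempty, the second over decompositions with `a, b` nonempty. -/
def arit (P M : Mould) : Mould := fun r u =>
  (∑ i : Fin (r + 1), ∑ k : Fin (r + 1),
    if h : i.1 < k.1 ∧ k.1 < r then
      M (i.1 + (r - k.1)) (flexUpper u i.1 k.1 h.1 h.2)
        * P (k.1 - i.1) (blockWord u i.1 k.1 (le_of_lt h.2))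
    else 0)
  - ∑ i : Fin (r + 1), ∑ k : Fin (r + 1),
    if h : 0 < i.1 ∧ i.1 < k.1 ∧ k.1 ≤ r then
      M (i.1 + (r - k.1)) (flexLower u i.1 k.1 h.1 h.2.1 h.2.2)
        * P (k.1 - i.1) (blockWord u i.1 k.1 h.2.2)
    else 0

/-- `Darit(P) = −dar ∘ (arit(Δ⁻¹(P)) − ad(Δ⁻¹(P))) ∘ dar⁻¹`, where `ad(X)·Y = lu(X,Y)`. -/
def Darit (P Q : Mould) : Mould := fun r u =>
  -(dar (fun s v => arit (deltaInv P) (darInv Q) s v - lu (deltaInv P) (darInv Q) s v) r u)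

/-- The `ari`-bracket: `ari(P,Q) = arit(Q)·P − arit(P)·Q + lu(P,Q)`. -/
def ari (P Q : Mould) : Mould := fun r u =>
  arit Q P r u - arit P Q r u + lu P Q r u

/-- The `Dari`-bracket: `Dari(P,Q) = Darit(P)·Q − Darit(Q)·P`. -/
def Dari (P Q : Mould) : Mould := fun r u => Darit P Q r u - Darit Q P r u

/-- The `push` operator: `push(P)(u_1,…,u_r) = P(−u_1−⋯−u_r, u_1,…,u_{r−1})`. -/
def push (P : Mould) : Mould := fun r u =>
  P r (fun j => if j.1 = 0 then -(∑ k, u k) else u ⟨j.1 - 1, by have := j.2; omega⟩)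

/-- The `swap` operator: `swap(P)(v_1,…,v_r) = P(v_r, v_{r−1}−v_r, …, v_1−v_2)`. -/
def swap (P : Mould) : Mould := fun r u =>
  P r (fun j =>
    if hj : j.1 = 0 then u ⟨r - 1, by have := j.2; omega⟩
    else u ⟨r - 1 - j.1, by have := j.2; omega⟩ - u ⟨r - j.1, by have := j.2; omega⟩)

/-- The mould `B = ma(b)` concentrated in depth 1, with `B(u_1) = 1`. -/
def Bm : Mould := fun r _ => if r = 1 then 1 else 0

/-- The mould `B₁ = ma([b,a])` concentrated in depth 1, with `B₁(u_1) = u_1`. -/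
def B1 : Mould := fun r u => if h : r = 1 then u ⟨0, by omega⟩ else 0

/-- A tuple of variables is *generic* when every consecutive block sum
`u_{i+1} + ⋯ + u_{j+1}` (`0 ≤ i ≤ j < r`) is nonzero; two rational-function
valued moulds are equal iff they agree at all generic tuples, and all
denominators occurring in the flexion operations are such block sums. -/
def Generic {r : ℕ} (u : Fin r → ℚ) : Prop :=
  ∀ (i j : ℕ) (_ : i ≤ j) (_ : j < r),
    (∑ m : Fin (j + 1 - i), u ⟨i + m.1, by have := m.2; omega⟩) ≠ 0

/-- A mould is polynomial-valued if each of its components is (the evaluation of)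
a polynomial. -/
def IsPolynomial (P : Mould) : Prop :=
  ∀ r : ℕ, ∃ p : MvPolynomial (Fin r) ℚ, ∀ u : Fin r → ℚ, P r u = MvPolynomial.eval u p

/-- The truncated word `(u_1,…,u_{r-1})`. -/
def init {r : ℕ} (u : Fin r → ℚ) : Fin (r - 1) → ℚ := take u (r - 1) (Nat.sub_le r 1)

/-- The shifted word `(u_2,…,u_r)`. -/
def tail {r : ℕ} (u : Fin r → ℚ) : Fin (r - 1) → ℚ := drop u 1

/-- The word `(u_2, …, u_{r−1}, −u_1−⋯−u_{r−1})`. -/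
def pushTail {r : ℕ} (u : Fin r → ℚ) : Fin (r - 1) → ℚ := fun j =>
  if j.1 = r - 2 then -(∑ m : Fin (r - 1), u ⟨m.1, by have := m.2; omega⟩)
  else u ⟨j.1 + 1, by have := j.2; omega⟩

end Mould

namespace Mould

/-- The mould associated to a word `w = (n_1, …, n_r)` in the generators
(the letter `n` standing for the generator `C_{n+1}`): it is concentrated in
depth `r = length w` where its value is `(−1)^{n_1+⋯+n_r} u_1^{n_1} ⋯ u_r^{n_r}`,
i.e. the monomial `C_{k_1} ⋯ C_{k_r}` (`k_j = n_j + 1`) goes to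
`(−1)^{k_1+⋯+k_r−r} u_1^{k_1−1} ⋯ u_r^{k_r−1}`. -/
def wordMould (w : List ℕ) : Mould := fun r u =>
  if h : r = w.length then
    ∏ j : Fin r, ((-1 : ℚ) ^ (w.get ⟨j.1, by have := j.2; omega⟩)
      * u j ^ (w.get ⟨j.1, by have := j.2; omega⟩))
  else 0

/-- `ℚ⟨C⟩`, the free associative `ℚ`-algebra on countably many generators
`C_1, C_2, C_3, …` (the index `n : ℕ` corresponds to the generator `C_{n+1}`). -/
abbrev QC : Type := FreeAlgebra ℚ ℕ

/-- The generator `C_k` (for `k ≥ 1`) of `ℚ⟨C⟩`. -/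
noncomputable def Cgen (k : ℕ) : QC := FreeAlgebra.ι ℚ (k - 1)

/-- The linear map `ma` from `ℚ⟨C⟩` to moulds: it sends `1` to the mould equal
to `1` in depth 0 and `0` in positive depths, and the monomial `C_{k_1} ⋯ C_{k_r}`
to the mould concentrated in depth `r` with value
`(−1)^{k_1+⋯+k_r−r} u_1^{k_1−1} ⋯ u_r^{k_r−1}`. -/
noncomputable def ma (f : QC) : Mould := fun r u =>
  Finsupp.sum
    (((FreeAlgebra.equivMonoidAlgebraFreeMonoid (R := ℚ) (X := ℕ)) f).coeff :
      FreeMonoid ℕ →₀ ℚ)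
    (fun w c => c * wordMould (FreeMonoid.toList w) r u)

end Mould

namespace Mould

/-- The elements `q_r ∈ ℚ⟨C⟩` defined recursively by `q_1 = −C_2` and
`q_{r+1} = q_r·C_1 − C_1·q_r` (so that `q_r` corresponds to the Lie element
`ad(−b)^r(−a)`). -/
noncomputable def qSeq : ℕ → QC
  | 0 => 0
  | 1 => -Cgen 2
  | (n + 2) => qSeq (n + 1) * Cgen 1 - Cgen 1 * qSeq (n + 1)

end Mould
namespace MaAux
open Mould

noncomputable def mono (w : List ℕ) : QC := (w.map (FreeAlgebra.ι ℚ)).prod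

lemma mono_nil : mono [] = 1 := by simp [mono]

lemma mono_cons (x : ℕ) (w : List ℕ) : mono (x :: w) = FreeAlgebra.ι ℚ x * mono w := by
  simp [mono]

lemma mono_append (w v : List ℕ) : mono (w ++ v) = mono w * mono v := by
  simp [mono]

lemma equiv_mono (w : List ℕ) :
    (FreeAlgebra.equivMonoidAlgebraFreeMonoid (R := ℚ)) (mono w)
      = MonoidAlgebra.single (FreeMonoid.ofList w) 1 := by
  induction w with
  | nil =>
    simp [mono_nil]
    rfl
  | cons x w ih =>
    rw [mono_cons, map_mul, ih]
    have hx : (FreeAlgebra.equivMonoidAlgebraFreeMonoid (R := ℚ)) (FreeAlgebra.ι ℚ x)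
        = MonoidAlgebra.single (FreeMonoid.of x) 1 := by
      simp [FreeAlgebra.equivMonoidAlgebraFreeMonoid]
    rw [hx, MonoidAlgebra.single_mul_single, one_mul]
    rfl

lemma ma_mono (w : List ℕ) (r : ℕ) (u : Fin r → ℚ) :
    ma (mono w) r u = wordMould w r u := by
  unfold ma
  rw [equiv_mono, MonoidAlgebra.coeff_single]
  rw [Finsupp.sum_single_index (by simp)]
  simp [FreeMonoid.toList_ofList]

noncomputable def maL (r : ℕ) (u : Fin r → ℚ) : QC →ₗ[ℚ] ℚ :=
  ((Finsupp.lsum ℚ (fun w : FreeMonoid ℕ =>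
      LinearMap.smulRight (LinearMap.id : ℚ →ₗ[ℚ] ℚ)
        (wordMould (FreeMonoid.toList w) r u))).comp
    ((MonoidAlgebra.coeffLinearEquiv ℚ).toLinearMap.comp
      (FreeAlgebra.equivMonoidAlgebraFreeMonoid (R := ℚ) (X := ℕ)).toLinearMap))

lemma ma_eq_maL (f : QC) (r : ℕ) (u : Fin r → ℚ) : ma f r u = maL r u f := by
  simp [ma, maL, Finsupp.lsum, Finsupp.sum, smul_eq_mul, mul_comm]

end MaAux
namespace MaAux
open Mould

def word (j n : ℕ) : List ℕ := List.replicate j 0 ++ 1 :: List.replicate (n - j) 0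

lemma word_length (j n : ℕ) (h : j ≤ n) : (word j n).length = n + 1 := by
  simp [word]; omega

lemma word_append (j n : ℕ) (h : j ≤ n) : word j n ++ [0] = word j (n + 1) := by
  simp only [word, List.append_assoc, List.cons_append]
  have : List.replicate (n - j) 0 ++ [0] = List.replicate (n + 1 - j) (0:ℕ) := by
    rw [show n + 1 - j = (n - j) + 1 by omega, List.replicate_succ']
  rw [this]

lemma word_cons (j n : ℕ) : (0 : ℕ) :: word j n = word (j + 1) (n + 1) := by
  simp [word, List.replicate_succ, show n + 1 - (j+1) = n - j by omega]

lemma word_get (j n i : ℕ) (hj : j ≤ n) (hi : i < n + 1) :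
    (word j n).get ⟨i, by rw [word_length j n hj]; omega⟩ = if i = j then 1 else 0 := by
  simp only [List.get_eq_getElem, word]
  rcases lt_trichotomy i j with h | h | h
  · rw [List.getElem_append_left (by simpa using h)]
    simp [h, Nat.ne_of_lt h]
  · subst h
    rw [List.getElem_append_right (by simp)]
    simp
  · rw [List.getElem_append_right (by simp; omega)]
    simp only [List.length_replicate]
    rw [List.getElem_cons]
    simp [show ¬ i - j = 0 by omega, Nat.ne_of_gt h]

lemma wordMould_word_ne (j n s : ℕ) (hj : j ≤ n) (hs : s ≠ n + 1) (u : Fin s → ℚ) :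
    wordMould (word j n) s u = 0 := by
  rw [wordMould, dif_neg (by rw [word_length j n hj]; omega)]

lemma wordMould_word (j n : ℕ) (hj : j ≤ n) (u : Fin (n+1) → ℚ) :
    wordMould (word j n) (n+1) u = -u ⟨j, by omega⟩ := by
  rw [wordMould, dif_pos (by rw [word_length j n hj])]
  have : ∀ i : Fin (n+1),
      ((-1 : ℚ) ^ ((word j n).get ⟨i.1, by rw [word_length j n hj]; exact i.2⟩)
        * u i ^ ((word j n).get ⟨i.1, by rw [word_length j n hj]; exact i.2⟩))
      = if i = ⟨j, by omega⟩ then -u ⟨j, by omega⟩ else 1 := by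
    intro i
    rw [word_get j n i.1 hj i.2]
    rcases eq_or_ne i (⟨j, by omega⟩ : Fin (n+1)) with h | h
    · subst h; simp
    · have : i.1 ≠ j := fun hc => h (Fin.ext hc)
      simp [this, h]
  rw [Finset.prod_congr rfl (fun i _ => this i)]
  simp

end MaAux
namespace MaAux
open Mould

lemma qSeq_eq (n : ℕ) :
    qSeq (n + 1) = ∑ j ∈ Finset.range (n + 1),
      ((-1 : ℚ) ^ (j + 1) * (n.choose j : ℚ)) • mono (word j n) := by
  induction n with
  | zero =>
    simp [qSeq, Cgen, word, mono]
  | succ n ih =>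
    have hq : qSeq (n + 2) = qSeq (n + 1) * FreeAlgebra.ι ℚ 0
        - FreeAlgebra.ι ℚ 0 * qSeq (n + 1) := by
      simp [qSeq, Cgen]
    set b : ℕ → ℚ := fun j => (-1 : ℚ) ^ (j + 1) * (n.choose j : ℚ) with hb
    set M : ℕ → QC := fun j => mono (word j (n + 1)) with hM
    have h1 : qSeq (n + 1) * FreeAlgebra.ι ℚ 0
        = ∑ j ∈ Finset.range (n + 1), b j • M j := by
      rw [ih, Finset.sum_mul]
      refine Finset.sum_congr rfl fun j hj => ?_
      rw [smul_mul_assoc]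
      congr 1
      simp only [hM]
      rw [← word_append j n (by simpa using Nat.lt_succ_iff.mp (Finset.mem_range.mp hj)),
        mono_append]
      simp [mono]
    have h2 : FreeAlgebra.ι ℚ 0 * qSeq (n + 1)
        = ∑ j ∈ Finset.range (n + 1), b j • M (j + 1) := by
      rw [ih, Finset.mul_sum]
      refine Finset.sum_congr rfl fun j hj => ?_
      rw [mul_smul_comm]
      congr 1
      simp only [hM]
      rw [← word_cons j n, mono_cons]
    rw [hq, h1, h2]
    -- target RHS
    have hc : ∀ j ∈ Finset.range (n + 1),
        ((-1 : ℚ) ^ (j + 1 + 1) * ((n+1).choose (j+1) : ℚ)) • M (j + 1)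
          = b (j + 1) • M (j + 1) - b j • M (j + 1) := by
      intro j _
      rw [← sub_smul]
      congr 1
      rw [hb]
      push_cast [Nat.choose_succ_succ]
      ring
    rw [Finset.sum_range_succ' (fun j =>
      ((-1 : ℚ) ^ (j + 1) * ((n+1).choose j : ℚ)) • M j) (n + 1)]
    rw [Finset.sum_congr rfl hc]
    have hb0 : ((-1 : ℚ) ^ (0 + 1) * ((n+1).choose 0 : ℚ)) • M 0 = b 0 • M 0 := by
      simp [hb]
    rw [hb0, Finset.sum_sub_distrib]
    have h3 : ∑ j ∈ Finset.range (n + 1), b (j + 1) • M (j + 1) + b 0 • M 0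
        = ∑ j ∈ Finset.range (n + 2), b j • M j := by
      rw [Finset.sum_range_succ' (fun j => b j • M j) (n + 1)]
    have h4 : ∑ j ∈ Finset.range (n + 2), b j • M j
        = ∑ j ∈ Finset.range (n + 1), b j • M j := by
      rw [Finset.sum_range_succ]
      simp [hb]
    rw [sub_add_eq_add_sub, h3, h4]

end MaAux
open Mould in
/-- For every `r ≥ 1`, the mould `ma(q_r)` is concentrated in
depth `r`, where its value is `Σ_{j=0}^{r−1} (−1)^j binom(r−1,j) u_{j+1}`. -/
theorem ma_qSeq (r : ℕ) (hr : 1 ≤ r) :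
    (∀ u : Fin r → ℚ,
      ma (qSeq r) r u = ∑ j : Fin r, (-1 : ℚ) ^ j.1 * ((r - 1).choose j.1 : ℚ) * u j) ∧
    (∀ s : ℕ, s ≠ r → ∀ u : Fin s → ℚ, ma (qSeq r) s u = 0) := by
  obtain ⟨n, rfl⟩ : ∃ n, r = n + 1 := ⟨r - 1, by omega⟩
  have key : ∀ (s : ℕ) (u : Fin s → ℚ),
      ma (qSeq (n + 1)) s u = ∑ j ∈ Finset.range (n + 1),
        ((-1 : ℚ) ^ (j + 1) * (n.choose j : ℚ)) * wordMould (MaAux.word j n) s u := by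
    intro s u
    rw [MaAux.ma_eq_maL, MaAux.qSeq_eq, map_sum]
    refine Finset.sum_congr rfl fun j hj => ?_
    rw [map_smul, smul_eq_mul, ← MaAux.ma_eq_maL, MaAux.ma_mono]
  constructor
  · intro u
    rw [key]
    have hR : (∑ j : Fin (n + 1), (-1 : ℚ) ^ j.1 * ((n + 1 - 1).choose j.1 : ℚ) * u j)
        = ∑ j ∈ Finset.range (n + 1),
          (if h : j < n + 1 then (-1 : ℚ) ^ j * (n.choose j : ℚ) * u ⟨j, h⟩ else 0) := by
      rw [← Fin.sum_univ_eq_sum_range]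
      refine Finset.sum_congr rfl fun j _ => ?_
      rw [dif_pos j.2]
      norm_num
    rw [hR]
    refine Finset.sum_congr rfl fun j hj => ?_
    have hjn : j ≤ n := by have := Finset.mem_range.mp hj; omega
    rw [MaAux.wordMould_word j n hjn u, dif_pos (by omega : j < n + 1)]
    rw [pow_succ]
    ring
  · intro s hs u
    rw [key]
    refine Finset.sum_eq_zero fun j hj => ?_
    rw [MaAux.wordMould_word_ne j n s (by have := Finset.mem_range.mp hj; omega) hs, mul_zero]
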